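/- Let $s \ge 1$, $\lambda \in (1/2, 1]$, let $B_1, \dots, B_s$ and $b_1, \dots, b_s$ be positive real numbers, and set $\rho := \dfrac{2\zeta(2\lambda)}{(2\pi^2)^\lambda}$ where $\zeta(x) = \sum_{k=1}^{\infty} k^{-x}$. For each nonempty $\mathfrak{u} \subseteq \{1,\dots,s\}$ define $\gamma_{\mathfrak{u}}(\lambda) := \Big(B_{|\mathfrak{u}|} \prod_{j\in\mathfrak{u}} \frac{(2\pi^2)^\lambda b_j^2}{2\zeta(2\lambda)}\Big)^{\frac{1}{1+\lambda}}$. Then for every family of positive reals $(\gamma_{\mathfrak{u}})_{\emptyset\neq\mathfrak{u}\subseteq\{1,\dots,s\}}$, $\Big(\sum_{\emptyset\neq\mathfrak{u}} \gamma_{\mathfrak{u}}(\lambda)^{\lambda} \rho^{|\mathfrak{u}|}\Big)^{1/\lambda} \Big(\sum_{\emptyset\neq\mathfrak{u}} \frac{B_{|\mathfrak{u}|}\prod_{j\in\mathfrak{u}} b_j^2}{\gamma_{\mathfrak{u}}(\lambda)}\Big) \;\le\; \Big(\sum_{\emptyset\neq\mathfrak{u}} \gamma_{\mathfrak{u}}^{\lambda}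 \rho^{|\mathfrak{u}|}\Big)^{1/\lambda} \Big(\sum_{\emptyset\neq\mathfrak{u}} \frac{B_{|\mathfrak{u}|}\prod_{j\in\mathfrak{u}} b_j^2}{\gamma_{\mathfrak{u}}}\Big)$. -/

import Mathlib

/-- `zetaSum x = ∑_{k=1}^∞ k^{-x}`, the Riemann zeta function as a real series. -/
noncomputable def zetaSum (x : ℝ) : ℝ := ∑' k : ℕ, ((k : ℝ) + 1) ^ (-x)


lemma zetaSum_pos {x : ℝ} (hx : 1 < x) : 0 < zetaSum x := by
  have hsum : Summable (fun k : ℕ => ((k : ℝ) + 1) ^ (-x)) := by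
    have h := (Real.summable_nat_rpow (p := -x)).2 (by linarith)
    exact ((summable_nat_add_iff 1).2 h).congr (fun n => by push_cast; ring_nf)
  calc (0:ℝ) < (((0:ℕ):ℝ) + 1) ^ (-x) := Real.rpow_pos_of_pos (by norm_num) _
    _ ≤ zetaSum x := hsum.le_tsum 0 (fun n _ => Real.rpow_nonneg (by positivity) _)


private lemma log_eq_of_pos {x y : ℝ} (hx : 0 < x) (hy : 0 < y)
    (h : Real.log x = Real.log y) : x = y := by
  rw [← Real.exp_log hx, ← Real.exp_log hy, h]

private lemma aux_pod {lam A R g : ℝ} (hl : 0 < lam) (hA : 0 < A) (hR : 0 < R)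
    (hg : 0 < g) :
    ((A / R) ^ (1 / (1 + lam))) ^ lam * R = A ^ (lam / (1 + lam)) * R ^ (1 / (1 + lam)) ∧
    A / (A / R) ^ (1 / (1 + lam)) = A ^ (lam / (1 + lam)) * R ^ (1 / (1 + lam)) ∧
    A ^ (lam / (1 + lam)) * R ^ (1 / (1 + lam)) =
      (g ^ lam * R) ^ (1 / (1 + lam)) * (A / g) ^ (lam / (1 + lam)) := by
  have h1l : (0:ℝ) < 1 + lam := by linarith
  have hAR : 0 < A / R := div_pos hA hR
  have hglam : 0 < g ^ lam := Real.rpow_pos_of_pos hg _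
  have hAg : 0 < A / g := div_pos hA hg
  have hRHS : 0 < A ^ (lam / (1 + lam)) * R ^ (1 / (1 + lam)) :=
    mul_pos (Real.rpow_pos_of_pos hA _) (Real.rpow_pos_of_pos hR _)
  refine ⟨log_eq_of_pos ?_ hRHS ?_, log_eq_of_pos ?_ hRHS ?_, log_eq_of_pos hRHS ?_ ?_⟩
  · exact mul_pos (Real.rpow_pos_of_pos (Real.rpow_pos_of_pos hAR _) _) hR
  · rw [Real.log_mul (by positivity) (by positivity), Real.log_rpow (by positivity),
      Real.log_rpow hAR, Real.log_div hA.ne' hR.ne',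
      Real.log_mul (by positivity) (by positivity), Real.log_rpow hA, Real.log_rpow hR]
    field_simp
    ring
  · exact div_pos hA (Real.rpow_pos_of_pos hAR _)
  · rw [Real.log_div hA.ne' (by positivity), Real.log_rpow hAR,
      Real.log_div hA.ne' hR.ne',
      Real.log_mul (by positivity) (by positivity), Real.log_rpow hA, Real.log_rpow hR]
    field_simp
    ring
  · exact mul_pos (Real.rpow_pos_of_pos (mul_pos hglam hR) _)
      (Real.rpow_pos_of_pos hAg _)
  · rw [Real.log_mul (by positivity) (by positivity), Real.log_rpow hA, Real.log_rpow hR,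
      Real.log_mul (by positivity) (by positivity), Real.log_rpow (mul_pos hglam hR),
      Real.log_rpow hAg, Real.log_mul hglam.ne' hR.ne', Real.log_rpow hg,
      Real.log_div hA.ne' hg.ne']
    field_simp
    ring

/-- The POD weights `γ_u(λ) = (B_{|u|} ∏_{j∈u} (2π²)^λ b_j² / (2ζ(2λ)))^{1/(1+λ)}`
minimise the CBC error bound: for any other choice of positive weights the product of
the worst-case-error bound and the norm bound is at least as large. -/
theorem pod_weights_minimise_bound (s : ℕ) (hs : 1 ≤ s) (lam : ℝ)
    (hlam : lam ∈ Set.Ioc (1 / 2 : ℝ) 1)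
    (B b : ℕ → ℝ)
    (hB : ∀ ℓ ∈ Finset.Icc 1 s, 0 < B ℓ) (hb : ∀ j ∈ Finset.Icc 1 s, 0 < b j) :
    ∀ γ : Finset ℕ → ℝ,
      (∀ u ∈ (Finset.Icc 1 s).powerset.filter (· ≠ ∅), 0 < γ u) →
      (∑ u ∈ (Finset.Icc 1 s).powerset.filter (· ≠ ∅),
            ((B u.card * ∏ j ∈ u,
                (2 * Real.pi ^ 2) ^ lam * b j ^ 2 / (2 * zetaSum (2 * lam))) ^
              (1 / (1 + lam))) ^ lam *
              (2 * zetaSum (2 * lam) / (2 * Real.pi ^ 2) ^ lam) ^ u.card) ^ (1 / lam) *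
          (∑ u ∈ (Finset.Icc 1 s).powerset.filter (· ≠ ∅),
            B u.card * (∏ j ∈ u, b j ^ 2) /
              (B u.card * ∏ j ∈ u,
                (2 * Real.pi ^ 2) ^ lam * b j ^ 2 / (2 * zetaSum (2 * lam))) ^
                (1 / (1 + lam)))
        ≤ (∑ u ∈ (Finset.Icc 1 s).powerset.filter (· ≠ ∅),
              γ u ^ lam *
                (2 * zetaSum (2 * lam) / (2 * Real.pi ^ 2) ^ lam) ^ u.card) ^ (1 / lam) *
            (∑ u ∈ (Finset.Icc 1 s).powerset.filter (· ≠ ∅),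
              B u.card * (∏ j ∈ u, b j ^ 2) / γ u) := by
  obtain ⟨hl1, hl2⟩ := hlam
  have hl0 : (0:ℝ) < lam := by linarith
  have h1l : (0:ℝ) < 1 + lam := by linarith
  intro γ hγ
  have hZ : 0 < zetaSum (2 * lam) := zetaSum_pos (by linarith)
  have hpi2 : (0:ℝ) < (2 * Real.pi ^ 2) ^ lam :=
    Real.rpow_pos_of_pos (by positivity) _
  set ρ : ℝ := 2 * zetaSum (2 * lam) / (2 * Real.pi ^ 2) ^ lam with hρdef
  have hρ0 : 0 < ρ := by positivity
  set T := (Finset.Icc 1 s).powerset.filter (· ≠ ∅) with hT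
  set a : Finset ℕ → ℝ := fun u => B u.card * ∏ j ∈ u, b j ^ 2 with ha
  have hmem : ∀ u ∈ T, u ⊆ Finset.Icc 1 s ∧ u ≠ ∅ := by
    intro u hu
    simpa [hT, Finset.mem_filter, Finset.mem_powerset] using hu
  have ha0 : ∀ u ∈ T, 0 < a u := by
    intro u hu
    obtain ⟨hsub, hne⟩ := hmem u hu
    have hcard : u.card ∈ Finset.Icc 1 s := by
      rw [Finset.mem_Icc]
      refine ⟨Finset.one_le_card.2 (Finset.nonempty_iff_ne_empty.2 hne), ?_⟩
      simpa using Finset.card_le_card hsub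
    exact mul_pos (hB _ hcard)
      (Finset.prod_pos fun j hj => pow_pos (hb j (hsub hj)) 2)
  have key1 : ∀ u ∈ T,
      B u.card * ∏ j ∈ u,
        (2 * Real.pi ^ 2) ^ lam * b j ^ 2 / (2 * zetaSum (2 * lam)) = a u / ρ ^ u.card := by
    intro u hu
    have : ∏ j ∈ u, (2 * Real.pi ^ 2) ^ lam * b j ^ 2 / (2 * zetaSum (2 * lam))
        = ∏ j ∈ u, b j ^ 2 / ρ := by
      refine Finset.prod_congr rfl fun j hj => ?_
      rw [hρdef]
      field_simp
    rw [this, Finset.prod_div_distrib, Finset.prod_const, ha, mul_div_assoc]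
  set c : Finset ℕ → ℝ :=
    fun u => a u ^ (lam / (1 + lam)) * (ρ ^ u.card) ^ (1 / (1 + lam)) with hc
  set S := ∑ u ∈ T, c u with hS
  set X := ∑ u ∈ T, γ u ^ lam * ρ ^ u.card with hX
  set Y := ∑ u ∈ T, a u / γ u with hY
  have hTne : T.Nonempty := by
    refine ⟨{1}, ?_⟩
    simp [hT, Finset.singleton_subset_iff, Finset.mem_Icc, hs]
  have hc0 : ∀ u ∈ T, 0 < c u := fun u hu =>
    mul_pos (Real.rpow_pos_of_pos (ha0 u hu) _)
      (Real.rpow_pos_of_pos (pow_pos hρ0 _) _)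
  have hS0 : 0 < S := Finset.sum_pos hc0 hTne
  have hX0 : 0 < X := Finset.sum_pos
    (fun u hu => mul_pos (Real.rpow_pos_of_pos (hγ u hu) _) (pow_pos hρ0 _)) hTne
  have hY0 : 0 < Y := Finset.sum_pos
    (fun u hu => div_pos (ha0 u hu) (hγ u hu)) hTne
  have hsum1 : (∑ u ∈ T,
      ((B u.card * ∏ j ∈ u,
          (2 * Real.pi ^ 2) ^ lam * b j ^ 2 / (2 * zetaSum (2 * lam))) ^
        (1 / (1 + lam))) ^ lam * ρ ^ u.card) = S := by
    refine Finset.sum_congr rfl fun u hu => ?_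
    rw [key1 u hu]
    exact (aux_pod hl0 (ha0 u hu) (pow_pos hρ0 _) one_pos).1
  have hsum2 : (∑ u ∈ T,
      B u.card * (∏ j ∈ u, b j ^ 2) /
        (B u.card * ∏ j ∈ u,
          (2 * Real.pi ^ 2) ^ lam * b j ^ 2 / (2 * zetaSum (2 * lam))) ^
          (1 / (1 + lam))) = S := by
    refine Finset.sum_congr rfl fun u hu => ?_
    rw [key1 u hu]
    exact (aux_pod hl0 (ha0 u hu) (pow_pos hρ0 _) one_pos).2.1
  have holder : S ≤ X ^ (1 / (1 + lam)) * Y ^ (lam / (1 + lam)) := by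
    have hpq : (1 + lam).HolderConjugate ((1 + lam) / lam) := by
      constructor
      · field_simp
      · linarith
      · positivity
    have H := Real.inner_le_Lp_mul_Lq T
      (fun u => (γ u ^ lam * ρ ^ u.card) ^ (1 / (1 + lam)))
      (fun u => (a u / γ u) ^ (lam / (1 + lam))) hpq
    have e1 : ∀ u ∈ T,
        c u = (γ u ^ lam * ρ ^ u.card) ^ (1 / (1 + lam)) *
          (a u / γ u) ^ (lam / (1 + lam)) := fun u hu =>
      (aux_pod hl0 (ha0 u hu) (pow_pos hρ0 _) (hγ u hu)).2.2
    rw [hS, Finset.sum_congr rfl e1]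
    refine H.trans (le_of_eq ?_)
    have eX : ∀ u ∈ T,
        |(γ u ^ lam * ρ ^ u.card) ^ (1 / (1 + lam))| ^ (1 + lam)
          = γ u ^ lam * ρ ^ u.card := by
      intro u hu
      have h1 : (0:ℝ) < γ u ^ lam * ρ ^ u.card :=
        mul_pos (Real.rpow_pos_of_pos (hγ u hu) _) (pow_pos hρ0 _)
      rw [abs_of_nonneg (Real.rpow_nonneg h1.le _), ← Real.rpow_mul h1.le,
        one_div, inv_mul_cancel₀ h1l.ne', Real.rpow_one]
    have eY : ∀ u ∈ T,
        |(a u / γ u) ^ (lam / (1 + lam))| ^ ((1 + lam) / lam) = a u / γ u := by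
      intro u hu
      have h2 : (0:ℝ) < a u / γ u := div_pos (ha0 u hu) (hγ u hu)
      rw [abs_of_nonneg (Real.rpow_nonneg h2.le _), ← Real.rpow_mul h2.le,
        show lam / (1 + lam) * ((1 + lam) / lam) = 1 by field_simp, Real.rpow_one]
    rw [Finset.sum_congr rfl eX, Finset.sum_congr rfl eY, one_div_div]
  rw [hsum1, hsum2]
  calc S ^ (1 / lam) * S = S ^ ((1 + lam) / lam) := by
        rw [show (1 + lam) / lam = 1 / lam + 1 by field_simp, Real.rpow_add hS0,
          Real.rpow_one]
    _ ≤ (X ^ (1 / (1 + lam)) * Y ^ (lam / (1 + lam))) ^ ((1 + lam) / lam) :=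
        Real.rpow_le_rpow hS0.le holder (by positivity)
    _ = X ^ (1 / lam) * Y := by
        rw [Real.mul_rpow (Real.rpow_nonneg hX0.le _) (Real.rpow_nonneg hY0.le _),
          ← Real.rpow_mul hX0.le, ← Real.rpow_mul hY0.le]
        rw [show 1 / (1 + lam) * ((1 + lam) / lam) = 1 / lam by field_simp,
          show lam / (1 + lam) * ((1 + lam) / lam) = 1 by field_simp, Real.rpow_one]
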